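/- Let ξ be an element of the closed linear span B = cl span{μ_x(a) : x ∈ Γ, a ∈ A} in ℓ∞(Γ, A). For every ε > 0 there exist y, z ∈ Γ such that ‖ξ(x)‖ < ε for all x < y, and ‖ξ(x) − α_{x−z}(ξ(z))‖ < ε for all x ≥ z. -/

import Mathlib

open scoped ENNReal

variable {Γ : Type*} [AddCommGroup Γ] [LinearOrder Γ] [IsOrderedAddMonoid Γ] {A : Type*} [NonUnitalCStarAlgebra A]

/-- The map `μ_x : A → ℓ∞(Γ, A)`, `(μ_x a)(y) = α_{y-x}(a)` for `y ≥ x` and `0` otherwise. -/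
noncomputable def mu (α : Γ → (A →⋆ₙₐ[ℂ] A)) (x : Γ) (a : A) :
    lp (fun _ : Γ => A) ∞ :=
  ⟨fun y => if x ≤ y then α (y - x) a else 0,
    memℓp_infty ⟨‖a‖, by
      rintro r ⟨y, rfl⟩
      dsimp only
      split_ifs
      · exact NonUnitalStarAlgHom.norm_apply_le _ _
      · simp⟩⟩

/-- The C*-subalgebra `B = cl span {μ_x(a) : x ∈ Γ, a ∈ A}` of `ℓ∞(Γ, A)`, as a subset. -/
noncomputable def BSet (α : Γ → (A →⋆ₙₐ[ℂ] A)) : Set (lp (fun _ : Γ => A) ∞) :=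
  closure (Submodule.span ℂ {ξ : lp (fun _ : Γ => A) ∞ | ∃ x a, ξ = mu α x a} : Set _)

lemma span_exact
    (α : Γ → (A →⋆ₙₐ[ℂ] A))
    (hα0 : ∀ a : A, α 0 a = a)
    (hαadd : ∀ s t : Γ, 0 ≤ s → 0 ≤ t → ∀ a : A, α (s + t) a = α s (α t a))
    (η : lp (fun _ : Γ => A) ∞)
    (hη : η ∈ (Submodule.span ℂ {ξ : lp (fun _ : Γ => A) ∞ | ∃ x a, ξ = mu α x a})) :
    ∃ y z : Γ, (∀ x : Γ, x < y → η x = 0) ∧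
      (∀ x : Γ, z ≤ x → η x = α (x - z) (η z)) := by
  induction hη using Submodule.span_induction with
  | mem ζ hζ =>
    obtain ⟨x0, a, rfl⟩ := hζ
    refine ⟨x0, x0, fun x hx => ?_, fun x hx => ?_⟩
    · show (if x0 ≤ x then α (x - x0) a else 0) = 0
      rw [if_neg (not_le.mpr hx)]
    · show (if x0 ≤ x then α (x - x0) a else 0)
        = α (x - x0) (if x0 ≤ x0 then α (x0 - x0) a else 0)
      rw [if_pos hx, if_pos le_rfl, sub_self, hα0]
  | zero =>
    exact ⟨0, 0, fun x _ => by simp, fun x _ => by simp⟩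
  | add η₁ η₂ _ _ ih₁ ih₂ =>
    obtain ⟨y₁, z₁, h₁, h₁'⟩ := ih₁
    obtain ⟨y₂, z₂, h₂, h₂'⟩ := ih₂
    refine ⟨min y₁ y₂, max z₁ z₂, fun x hx => ?_, fun x hx => ?_⟩
    · have := h₁ x (lt_of_lt_of_le hx (min_le_left _ _))
      have := h₂ x (lt_of_lt_of_le hx (min_le_right _ _))
      simp only [lp.coeFn_add, Pi.add_apply, *, add_zero]
    · set z := max z₁ z₂
      have key : ∀ (ζ : lp (fun _ : Γ => A) ∞) (zi : Γ), zi ≤ z →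
          (∀ x : Γ, zi ≤ x → ζ x = α (x - zi) (ζ zi)) → ζ x = α (x - z) (ζ z) := by
        intro ζ zi hzi hzeta
        rw [hzeta x (hzi.trans hx), hzeta z hzi, ← hαadd _ _ (sub_nonneg.mpr hx)
          (sub_nonneg.mpr hzi), sub_add_sub_cancel]
      have k₁ := key η₁ z₁ (le_max_left _ _) h₁'
      have k₂ := key η₂ z₂ (le_max_right _ _) h₂'
      simp only [lp.coeFn_add, Pi.add_apply, k₁, k₂, map_add]
  | smul c η₁ _ ih =>
    obtain ⟨y, z, h, h'⟩ := ih
    refine ⟨y, z, fun x hx => ?_, fun x hx => ?_⟩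
    · simp only [lp.coeFn_smul, Pi.smul_apply, h x hx, smul_zero]
    · simp only [lp.coeFn_smul, Pi.smul_apply, h' x hx, map_smul]

/-- Approximation property of elements of `B`: for `ξ ∈ B` and `ε > 0` there are
`y, z ∈ Γ` with `‖ξ(x)‖ < ε` for all `x < y`, and `‖ξ(x) - α_{x-z}(ξ(z))‖ < ε` for all
`x ≥ z`. -/
theorem mem_B_approximation
    {Γ : Type*} [AddCommGroup Γ] [LinearOrder Γ] [IsOrderedAddMonoid Γ] {A : Type*} [NonUnitalCStarAlgebra A]
    (α : Γ → (A →⋆ₙₐ[ℂ] A))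
    (hα0 : ∀ a : A, α 0 a = a)
    (hαadd : ∀ s t : Γ, 0 ≤ s → 0 ≤ t → ∀ a : A, α (s + t) a = α s (α t a))
    (ξ : lp (fun _ : Γ => A) ∞) (hξ : ξ ∈ BSet α) :
    ∀ ε : ℝ, 0 < ε → ∃ y z : Γ,
      (∀ x : Γ, x < y → ‖ξ x‖ < ε) ∧
      (∀ x : Γ, z ≤ x → ‖ξ x - α (x - z) (ξ z)‖ < ε) := by
  intro ε hε
  obtain ⟨η, hηmem, hηclose⟩ := Metric.mem_closure_iff.mp hξ (ε / 3) (by linarith)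
  have hnorm : ‖ξ - η‖ < ε / 3 := by
    rwa [← dist_eq_norm]
  have happ : ∀ x : Γ, ‖ξ x - η x‖ < ε / 3 := fun x => by
    calc ‖ξ x - η x‖ = ‖(ξ - η) x‖ := by simp [lp.coeFn_sub]
    _ ≤ ‖ξ - η‖ := lp.norm_apply_le_norm (by norm_num) _ _
    _ < ε / 3 := hnorm
  obtain ⟨y, z, h1, h2⟩ := span_exact α hα0 hαadd η hηmem
  refine ⟨y, z, fun x hx => ?_, fun x hx => ?_⟩
  · calc ‖ξ x‖ = ‖ξ x - η x‖ := by rw [h1 x hx, sub_zero]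
    _ < ε / 3 := happ x
    _ < ε := by linarith
  · have : ξ x - α (x - z) (ξ z) = (ξ x - η x) + α (x - z) (η z - ξ z) := by
      rw [map_sub, h2 x hx]; abel
    calc ‖ξ x - α (x - z) (ξ z)‖
        ≤ ‖ξ x - η x‖ + ‖α (x - z) (η z - ξ z)‖ := by rw [this]; exact norm_add_le _ _
      _ ≤ ‖ξ x - η x‖ + ‖η z - ξ z‖ := by
          gcongr; exact NonUnitalStarAlgHom.norm_apply_le _ _
      _ < ε / 3 + ε / 3 := by
          have := happ z
          rw [norm_sub_rev] at this
          linarith [happ x]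
      _ < ε := by linarith
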